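/- For positive integers n and q, the number of sequences x : Fin n → ℕ with all entries ≤ q−1, minimum entry 0, maximum entry positive, and gcd of entries equal to 1, equals the sum over d from 1 to q−1 of μ(d)·((⌊(q−1)/d⌋+1)^n − ⌊(q−1)/d⌋^n − 1), where μ is the Möbius function. -/

import Mathlib

open Finset ArithmeticFunction
open scoped ArithmeticFunction.Moebius


lemma moebius_divisor_sum (g : ℕ) :
    (∑ d ∈ g.divisors, (μ d : ℤ)) = if g = 1 then 1 else 0 := by
  rw [← coe_mul_zeta_apply, moebius_mul_coe_zeta, ArithmeticFunction.one_apply]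

lemma count_zero_nonzero (n k : ℕ) (hn : 0 < n) :
    ((((Fintype.piFinset fun _ : Fin n => Finset.range (k+1)).filter
        (fun y => (∃ i, y i = 0) ∧ (∃ i, 0 < y i))).card : ℤ))
      = ((k+1 : ℕ) : ℤ) ^ n - (k : ℤ) ^ n - 1 := by
  classical
  have hbasecard : (Fintype.piFinset fun _ : Fin n => Finset.range (k+1)).card = (k+1)^n := by
    rw [Fintype.card_piFinset]; simp
  have hneg : (Fintype.piFinset fun _ : Fin n => Finset.range (k+1)).filter
        (fun y => ¬((∃ i, y i = 0) ∧ (∃ i, 0 < y i)))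
      = (Fintype.piFinset fun _ : Fin n => Finset.range (k+1)).filter (fun y => ∀ i, y i ≠ 0)
        ∪ (Fintype.piFinset fun _ : Fin n => Finset.range (k+1)).filter (fun y => ∀ i, y i = 0) := by
    rw [← Finset.filter_or]
    apply Finset.filter_congr
    intro y _
    simp only [not_and_or, not_exists, not_lt, Nat.le_zero, ne_eq]
  have hdisj : Disjoint
      ((Fintype.piFinset fun _ : Fin n => Finset.range (k+1)).filter (fun y => ∀ i, y i ≠ 0))
      ((Fintype.piFinset fun _ : Fin n => Finset.range (k+1)).filter (fun y => ∀ i, y i = 0)) := by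
    rw [Finset.disjoint_left]
    intro y h1 h2
    rw [mem_filter] at h1 h2
    exact h1.2 ⟨0, hn⟩ (h2.2 ⟨0, hn⟩)
  have hc1 : ((Fintype.piFinset fun _ : Fin n => Finset.range (k+1)).filter
      (fun y => ∀ i, y i ≠ 0)).card = k^n := by
    have he : (Fintype.piFinset fun _ : Fin n => Finset.range (k+1)).filter (fun y => ∀ i, y i ≠ 0)
        = Fintype.piFinset fun _ : Fin n => Finset.Icc 1 k := by
      ext y
      simp only [mem_filter, Fintype.mem_piFinset, Finset.mem_range, Finset.mem_Icc, ne_eq]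
      constructor
      · rintro ⟨h1, h2⟩ i
        have := h1 i
        have := h2 i
        omega
      · intro h
        constructor
        · intro i; have := (h i).2; omega
        · intro i; have := (h i).1; omega
    rw [he, Fintype.card_piFinset]
    simp
  have hc2 : ((Fintype.piFinset fun _ : Fin n => Finset.range (k+1)).filter
      (fun y => ∀ i, y i = 0)).card = 1 := by
    rw [Finset.card_eq_one]
    refine ⟨fun _ => 0, ?_⟩
    ext y
    simp only [mem_filter, Finset.mem_singleton, Fintype.mem_piFinset, Finset.mem_range]
    constructor
    · rintro ⟨_, h⟩; funext i; exact h i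
    · rintro rfl; exact ⟨fun i => Nat.succ_pos k, fun i => rfl⟩
  have hsplit := Finset.card_filter_add_card_filter_not
    (s := Fintype.piFinset fun _ : Fin n => Finset.range (k+1))
    (p := fun y => (∃ i, y i = 0) ∧ (∃ i, 0 < y i))
  rw [hneg, Finset.card_union_of_disjoint hdisj, hc1, hc2, hbasecard] at hsplit
  have h2 : (((Fintype.piFinset fun _ : Fin n => Finset.range (k+1)).filter
        (fun y => (∃ i, y i = 0) ∧ (∃ i, 0 < y i))).card : ℤ)
      + ((k^n : ℕ) : ℤ) + 1 = ((k+1)^n : ℕ) := by exact_mod_cast hsplit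
  push_cast at h2 ⊢
  linarith


lemma count_div (n m d : ℕ) (hd : 1 ≤ d) :
    ((Fintype.piFinset fun _ : Fin n => Finset.range (m+1)).filter
      (fun x => ((∃ i, x i = 0) ∧ (∃ i, 0 < x i)) ∧ ∀ i, d ∣ x i)).card
    = ((Fintype.piFinset fun _ : Fin n => Finset.range (m/d+1)).filter
      (fun y => (∃ i, y i = 0) ∧ (∃ i, 0 < y i))).card := by
  classical
  apply Finset.card_bij' (fun x _ => fun j => x j / d) (fun y _ => fun j => d * y j)
  · intro x hx
    rw [mem_filter] at hx ⊢
    obtain ⟨hb, ⟨⟨i0, h0⟩, ⟨i1, h1⟩⟩, hdvd⟩ := hx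
    rw [Fintype.mem_piFinset] at hb
    refine ⟨?_, ⟨i0, by simp only []; rw [h0]; exact Nat.zero_div d⟩, ⟨i1, ?_⟩⟩
    · rw [Fintype.mem_piFinset]
      intro j
      have h1' := hb j
      rw [Finset.mem_range] at h1'
      have h2' : x j / d ≤ m / d := Nat.div_le_div_right (by omega)
      rw [Finset.mem_range]
      omega
    · exact Nat.div_pos (Nat.le_of_dvd h1 (hdvd i1)) (by omega)
  · intro y hy
    rw [mem_filter] at hy ⊢
    obtain ⟨hb, ⟨i0, h0⟩, ⟨i1, h1⟩⟩ := hy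
    rw [Fintype.mem_piFinset] at hb
    refine ⟨?_, ⟨⟨i0, by simp only []; rw [h0, Nat.mul_zero]⟩, ⟨i1, by simp only []; positivity⟩⟩, fun j => Dvd.intro _ rfl⟩
    rw [Fintype.mem_piFinset]
    intro j
    have hj := hb j
    rw [Finset.mem_range] at hj
    rw [Finset.mem_range]
    have h2 : d * y j ≤ d * (m / d) := Nat.mul_le_mul_left d (by omega)
    have h3 : d * (m / d) ≤ m := Nat.mul_div_le m d
    omega
  · intro x hx
    rw [mem_filter] at hx
    funext j
    exact Nat.mul_div_cancel' (hx.2.2 j)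
  · intro y hy
    funext j
    exact Nat.mul_div_cancel_left _ (by omega)

/-- For positive integers `n` and `q` (with `q ≥ 2`), the number of sequences
`x : Fin n → ℕ` with entries `≤ q-1`, minimum entry 0, positive maximum entry,
and gcd of entries 1 equals
`∑_{d=1}^{q-1} μ(d)·((⌊(q-1)/d⌋+1)^n − ⌊(q-1)/d⌋^n − 1)`. -/
theorem stmt_10 (q n : ℕ) (hq : 2 ≤ q) (hn : 0 < n) :
    ((Set.ncard {x : Fin n → ℕ |
        (∀ i, x i ≤ q - 1) ∧ (∃ i, x i = 0) ∧ (∃ i, 0 < x i) ∧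
        Finset.univ.gcd x = 1} : ℤ))
      = ∑ d ∈ Finset.Icc 1 (q - 1),
          ArithmeticFunction.moebius d *
            ((((q - 1) / d + 1 : ℕ) : ℤ) ^ n - (((q - 1) / d : ℕ) : ℤ) ^ n - 1) := by
  classical
  obtain ⟨m, hm⟩ : ∃ m, q - 1 = m := ⟨q - 1, rfl⟩
  have hm1 : 1 ≤ m := by omega
  rw [hm]
  have hset : {x : Fin n → ℕ |
      (∀ i, x i ≤ m) ∧ (∃ i, x i = 0) ∧ (∃ i, 0 < x i) ∧
      Finset.univ.gcd x = 1}
      = ↑(((Fintype.piFinset fun _ : Fin n => Finset.range (m+1)).filter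
          (fun x => (∃ i, x i = 0) ∧ (∃ i, 0 < x i))).filter
          (fun x => Finset.univ.gcd x = 1)) := by
    ext x
    simp only [Set.mem_setOf_eq, coe_filter, mem_filter,
      Fintype.mem_piFinset, Finset.mem_range, Set.mem_setOf_eq]
    constructor
    · rintro ⟨h1, h2, h3, h4⟩
      exact ⟨⟨fun i => by have := h1 i; omega, h2, h3⟩, h4⟩
    · rintro ⟨⟨h1, h2, h3⟩, h4⟩
      exact ⟨fun i => by have := h1 i; omega, h2, h3, h4⟩
  rw [hset, Set.ncard_coe_finset]
  have hgcd_mem : ∀ x ∈ (Fintype.piFinset fun _ : Fin n => Finset.range (m+1)).filter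
      (fun x => (∃ i, x i = 0) ∧ (∃ i, 0 < x i)),
      1 ≤ Finset.univ.gcd x ∧ Finset.univ.gcd x ≤ m := by
    intro x hx
    rw [mem_filter] at hx
    obtain ⟨hb, _, i, hi⟩ := hx
    have hd : Finset.univ.gcd x ∣ x i := Finset.gcd_dvd (Finset.mem_univ i)
    have hxi : x i ≤ m := by
      rw [Fintype.mem_piFinset] at hb
      have := hb i; rw [Finset.mem_range] at this; omega
    constructor
    · rcases Nat.eq_zero_or_pos (Finset.univ.gcd x) with h | h
      · rw [h] at hd
        obtain ⟨c, hc⟩ := hd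
        omega
      · omega
    · exact le_trans (Nat.le_of_dvd hi hd) hxi
  have key : ((((Fintype.piFinset fun _ : Fin n => Finset.range (m+1)).filter
          (fun x => (∃ i, x i = 0) ∧ (∃ i, 0 < x i))).filter
          (fun x => Finset.univ.gcd x = 1)).card : ℤ)
      = ∑ x ∈ (Fintype.piFinset fun _ : Fin n => Finset.range (m+1)).filter
          (fun x => (∃ i, x i = 0) ∧ (∃ i, 0 < x i)),
          ∑ d ∈ Finset.Icc 1 m, (if d ∣ Finset.univ.gcd x then (μ d : ℤ) else 0) := by
    rw [Finset.card_filter]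
    push_cast
    refine Finset.sum_congr rfl fun x hx => ?_
    obtain ⟨hg1, hgm⟩ := hgcd_mem x hx
    have hfe : (Finset.Icc 1 m).filter (· ∣ Finset.univ.gcd x)
        = (Finset.univ.gcd x).divisors := by
      ext d
      simp only [mem_filter, Finset.mem_Icc, Nat.mem_divisors]
      constructor
      · rintro ⟨⟨hd1, _⟩, hdd⟩; exact ⟨hdd, by omega⟩
      · rintro ⟨hdd, hg0⟩
        have hd0 : d ≠ 0 := by
          rintro rfl
          obtain ⟨c, hc⟩ := hdd
          omega
        exact ⟨⟨by omega, le_trans (Nat.le_of_dvd (by omega) hdd) hgm⟩, hdd⟩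
    rw [← Finset.sum_filter, hfe, moebius_divisor_sum]
  rw [key, Finset.sum_comm]
  refine Finset.sum_congr rfl fun d hd => ?_
  rw [Finset.mem_Icc] at hd
  have hd1 : 1 ≤ d := hd.1
  rw [← Finset.sum_filter, Finset.sum_const, nsmul_eq_mul, mul_comm]
  congr 1
  have hfilt : ((Fintype.piFinset fun _ : Fin n => Finset.range (m+1)).filter
        (fun x => (∃ i, x i = 0) ∧ (∃ i, 0 < x i))).filter
        (fun x => d ∣ Finset.univ.gcd x)
      = (Fintype.piFinset fun _ : Fin n => Finset.range (m+1)).filter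
        (fun x => ((∃ i, x i = 0) ∧ (∃ i, 0 < x i)) ∧ ∀ i, d ∣ x i) := by
    rw [Finset.filter_filter]
    apply Finset.filter_congr
    intro x _
    constructor
    · rintro ⟨h1, h2⟩
      exact ⟨h1, fun i => Finset.dvd_gcd_iff.mp h2 i (Finset.mem_univ i)⟩
    · rintro ⟨h1, h2⟩
      exact ⟨h1, Finset.dvd_gcd fun i _ => h2 i⟩
  rw [hfilt, count_div n m d hd1, count_zero_nonzero n (m/d) hn]
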